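/- If a linear order ≺ on the edge set of an acyclic directed graph satisfies the nesting condition (Q₂), then it satisfies (U₂): for every vertex v, the convex hulls of the incoming edge set I(v) and the outgoing edge set O(v) are disjoint, and the convex hull of E(v) = I(v) ∪ O(v) equals the disjoint union of the convex hulls of I(v) and O(v). -/
import Mathlib


structure Digraph' (V E : Type) where
  s : E → V
  t : E → V

def conv {E : Type} [LinearOrder E] (X : Set E) : Set E :=
  {y | ∃ a ∈ X, ∃ b ∈ X, a ≤ y ∧ y ≤ b}

namespace Digraph'

variable {V E : Type} (G : Digraph' V E)

/-- One edge can be followed by another. -/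
def step (e f : E) : Prop := G.t e = G.s f

/-- The reachable order: a directed path starts with `e₁` and ends with `e₂`
(including the case `e₁ = e₂`). -/
def reach : E → E → Prop := Relation.ReflTransGen G.step

/-- No directed cycles. -/
def Acyclic : Prop := ∀ e, ¬ Relation.TransGen G.step e e

/-- Incoming edges of a vertex. -/
def I (v : V) : Set E := {e | G.t e = v}

/-- Outgoing edges of a vertex. -/
def O (v : V) : Set E := {e | G.s e = v}

/-- All edges incident to a vertex `v` (incoming or outgoing). -/
def Ev (v : V) : Set E := G.I v ∪ G.O v

variable [LinearOrder E]

/-- (U₁): reachability implies order. -/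
def U1 : Prop := ∀ e₁ e₂ : E, G.reach e₁ e₂ → e₁ ≤ e₂

/-- (U₂): for every vertex, the hulls of incoming and outgoing edges are disjoint and
together give the hull of all incident edges. -/
def U2 : Prop := ∀ v : V,
  conv (G.I v) ∩ conv (G.O v) = ∅ ∧ conv (G.Ev v) = conv (G.I v) ∪ conv (G.O v)

/-- (U₃). -/
def U3 : Prop := ∀ v₁ v₂ : V,
  ((G.I v₁ ∩ conv (G.I v₂)).Nonempty → conv (G.I v₁) ⊆ conv (G.I v₂)) ∧
  ((G.O v₁ ∩ conv (G.O v₂)).Nonempty → conv (G.O v₁) ⊆ conv (G.O v₂))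

/-- (Q₂), the nesting condition. -/
def Q2 : Prop := ∀ e₁ e e₂ : E, e₁ < e → e < e₂ →
  (G.t e₁ = G.t e₂ → G.I (G.t e) ⊆ conv (G.I (G.t e₁))) ∧
  (G.s e₁ = G.s e₂ → G.O (G.s e) ⊆ conv (G.O (G.s e₁))) ∧
  (G.t e₁ = G.s e₂ →
    G.I (G.t e) ⊆ conv (G.I (G.t e₁)) ∨ G.O (G.s e) ⊆ conv (G.O (G.s e₂)))

end Digraph'

open Digraph' in
/-- (Q₂) (together with (Q₁)) implies (U₂). -/
theorem U2_of_Q2 {V E : Type} [Fintype V] [Fintype E] [LinearOrder E]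
    (G : Digraph' V E) (hG : G.Acyclic) (hQ1 : G.U1) (hQ2 : G.Q2) :
    G.U2 := by
  intro v
  have key : ∀ e ∈ G.I v, ∀ f ∈ G.O v, e < f := by
    intro e he f hf
    have hs : G.step e f := by
      simp only [Digraph'.I, Digraph'.O, Set.mem_setOf_eq] at he hf
      simp [Digraph'.step, he, hf]
    have hle : e ≤ f := hQ1 e f (Relation.ReflTransGen.single hs)
    rcases lt_or_eq_of_le hle with h | h
    · exact h
    · exact absurd (Relation.TransGen.single (h ▸ hs)) (hG e)
  constructor
  · ext y
    simp only [Set.mem_inter_iff, Set.mem_empty_iff_false, iff_false]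
    rintro ⟨⟨a, ha, b, hb, hay, hyb⟩, ⟨c, hc, d, hd, hcy, hyd⟩⟩
    exact absurd (hcy.trans hyb) (not_le.mpr (key b hb c hc))
  · apply Set.Subset.antisymm
    · rintro y ⟨a, ha, b, hb, hay, hyb⟩
      rcases ha with ha | ha <;> rcases hb with hb | hb
      · exact Or.inl ⟨a, ha, b, hb, hay, hyb⟩
      · -- a ∈ I v, b ∈ O v
        rcases eq_or_lt_of_le hay with h | hay'
        · exact Or.inl ⟨y, h ▸ ha, y, h ▸ ha, le_rfl, le_rfl⟩
        rcases eq_or_lt_of_le hyb with h | hyb'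
        · exact Or.inr ⟨y, h ▸ hb, y, h ▸ hb, le_rfl, le_rfl⟩
        have hts : G.t a = G.s b := by
          simp only [Digraph'.I, Digraph'.O, Set.mem_setOf_eq] at ha hb
          rw [ha, hb]
        rcases (hQ2 a y b hay' hyb').2.2 hts with h | h
        · have hy : y ∈ conv (G.I (G.t a)) := h (by simp [Digraph'.I])
          have ha' : G.t a = v := ha
          rw [ha'] at hy
          exact Or.inl hy
        · have hy : y ∈ conv (G.O (G.s b)) := h (by simp [Digraph'.O])
          have hb' : G.s b = v := hb
          rw [hb'] at hy
          exact Or.inr hy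
      · exact absurd (hay.trans hyb) (not_le.mpr (key b hb a ha))
      · exact Or.inr ⟨a, ha, b, hb, hay, hyb⟩
    · rintro y (⟨a, ha, b, hb, hay, hyb⟩ | ⟨a, ha, b, hb, hay, hyb⟩)
      · exact ⟨a, Or.inl ha, b, Or.inl hb, hay, hyb⟩
      · exact ⟨a, Or.inr ha, b, Or.inr hb, hay, hyb⟩
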